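/- Let q ≥ 5 and let 𝒞 be the [q+1, q-3, 5]_q MDS code with weight distribution A_w. Any weight-3 coset V of 𝒞 with B_3(V) = b satisfies B_4(V) = C(q+1, 4) - (q-2)*b and, for 5 ≤ w ≤ q+1, B_w(V) = A_w + (-1)^w * ( C(q+1, w)*C(w-1, 3) - C(q-2, w-3)*b ). -/

import Mathlib

open Finset

private lemma neg_one_pow_sub' {s w : ℕ} (h : s ≤ w) :
    (-1 : ℤ) ^ (w - s) = (-1) ^ w * (-1) ^ s := by
  have h2 : (-1 : ℤ) ^ (w - s) * (-1) ^ s = (-1) ^ w := by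
    rw [← pow_add, Nat.sub_add_cancel h]
  have h3 : (-1 : ℤ) ^ s * (-1) ^ s = 1 := by
    rw [← pow_add, ← two_mul, pow_mul]; norm_num
  calc (-1 : ℤ) ^ (w - s) = (-1) ^ (w - s) * ((-1) ^ s * (-1) ^ s) := by rw [h3, mul_one]
    _ = ((-1) ^ (w - s) * (-1) ^ s) * (-1) ^ s := by ring
    _ = (-1) ^ w * (-1) ^ s := by rw [h2]

private lemma alt_sum_choose (w : ℕ) (hw : 1 ≤ w) (m : ℕ) :
    ∑ j ∈ range (m + 1), (-1 : ℤ) ^ j * (w.choose j : ℤ)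
      = (-1) ^ m * ((w - 1).choose m : ℤ) := by
  induction m with
  | zero => simp
  | succ m ih =>
    rw [Finset.sum_range_succ, ih]
    obtain ⟨w', rfl⟩ : ∃ w', w = w' + 1 := ⟨w - 1, by omega⟩
    simp only [Nat.add_sub_cancel]
    rw [Nat.choose_succ_succ' w' m]
    push_cast
    ring

private lemma key_ident (q w : ℕ) (hw : 5 ≤ w) :
    (∑ j ∈ range (w + 1),
        if 4 ≤ j then (w.choose j : ℤ) * ((-1) ^ (w - j) * (q : ℤ) ^ (j - 4)) else 0)
      = (∑ j ∈ range (w - 4), (-1 : ℤ) ^ j * (w.choose j : ℤ) * ((q : ℤ) ^ (w - 4 - j) - 1))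
        + (-1) ^ w * ((w - 1).choose 3 : ℤ) := by
  have hrefl := Finset.sum_range_reflect
    (fun j => if 4 ≤ j then (w.choose j : ℤ) * ((-1) ^ (w - j) * (q : ℤ) ^ (j - 4)) else 0) (w + 1)
  simp only [Nat.add_sub_cancel] at hrefl
  rw [← hrefl]
  have hsub : range (w - 3) ⊆ range (w + 1) := by
    apply Finset.range_subset_range.2; omega
  rw [← Finset.sum_subset hsub (by
    intro j hj hj2
    simp only [mem_range] at hj hj2
    have : ¬ (4 ≤ w - j) := by omega
    simp [this])]
  have hcongr : ∀ j ∈ range (w - 3),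
      (if 4 ≤ w - j then (w.choose (w - j) : ℤ) * ((-1) ^ (w - (w - j)) * (q : ℤ) ^ (w - j - 4)) else 0)
        = (-1 : ℤ) ^ j * (w.choose j : ℤ) * (q : ℤ) ^ (w - 4 - j) := by
    intro j hj
    simp only [mem_range] at hj
    have h4 : 4 ≤ w - j := by omega
    rw [if_pos h4, Nat.choose_symm (by omega : j ≤ w), Nat.sub_sub_self (by omega : j ≤ w),
      show w - j - 4 = w - 4 - j by omega]
    ring
  rw [Finset.sum_congr rfl hcongr]
  have hsplit : w - 3 = (w - 4) + 1 := by omega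
  rw [hsplit, Finset.sum_range_succ]
  have hlast : (-1 : ℤ) ^ (w - 4) * (w.choose (w - 4) : ℤ) * (q : ℤ) ^ (w - 4 - (w - 4))
      = (-1) ^ w * (w.choose 4 : ℤ) := by
    rw [Nat.sub_self, pow_zero, Nat.choose_symm (by omega : 4 ≤ w),
      neg_one_pow_sub' (by omega : 4 ≤ w)]
    norm_num
  rw [hlast]
  have hmain : ∑ j ∈ range (w - 4), (-1 : ℤ) ^ j * (w.choose j : ℤ) * (q : ℤ) ^ (w - 4 - j)
      = (∑ j ∈ range (w - 4), (-1 : ℤ) ^ j * (w.choose j : ℤ) * ((q : ℤ) ^ (w - 4 - j) - 1))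
        + ∑ j ∈ range (w - 4), (-1 : ℤ) ^ j * (w.choose j : ℤ) := by
    rw [← Finset.sum_add_distrib]
    exact Finset.sum_congr rfl (fun j _ => by ring)
  rw [hmain]
  have h44 : w - 4 = (w - 5) + 1 := by omega
  rw [h44, alt_sum_choose w (by omega) (w - 5)]
  have hsymm : (w - 1).choose (w - 5) = (w - 1).choose 4 := by
    rw [show w - 5 = (w - 1) - 4 by omega, Nat.choose_symm (by omega : 4 ≤ w - 1)]
  have hpascal : w.choose 4 = (w - 1).choose 3 + (w - 1).choose 4 := by
    rw [show w = (w - 1) + 1 by omega]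
    simp only [Nat.add_sub_cancel]
    exact Nat.choose_succ_succ' (w - 1) 3
  rw [hsymm, hpascal, neg_one_pow_sub' (by omega : 5 ≤ w)]
  push_cast
  ring

/-- Weight distribution of a weight-3 coset of a `[q+1, q-3, 5]_q` MDS code:
if `B₃(V) = b` then `B₄(V) = C(q+1,4) - (q-2)·b` and, for `5 ≤ w ≤ q+1`,
`B_w(V) = A_w + (-1)^w (C(q+1,w)·C(w-1,3) - C(q-2,w-3)·b)`. -/
theorem weight_three_coset_distribution (F : Type*) [Field F] [Fintype F] [DecidableEq F]
    (q : ℕ) (hq : 5 ≤ q) (hcard : Fintype.card F = q)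
    (C : Submodule F (Fin (q + 1) → F))
    (hdim : Module.finrank F C = q - 3)
    (hmin : ∀ x ∈ C, x ≠ 0 → 5 ≤ hammingNorm x)
    (hmin5 : ∃ x ∈ C, x ≠ 0 ∧ hammingNorm x = 5)
    (A : ℕ → ℤ)
    (hA : ∀ w, 5 ≤ w → A w = ((q + 1).choose w : ℤ) *
      ∑ j ∈ Finset.range (w - 4),
        (-1 : ℤ) ^ j * (w.choose j : ℤ) * ((q : ℤ) ^ (w - 4 - j) - 1))
    (hA0 : ∀ w, 1 ≤ w → w ≤ 4 → A w = 0)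
    (v : Fin (q + 1) → F) (V : Set (Fin (q + 1) → F))
    (hV : V = {u | u - v ∈ C})
    (hwt : ∀ u ∈ V, 3 ≤ hammingNorm u)
    (hwt3 : ∃ u ∈ V, hammingNorm u = 3)
    (B : ℕ → ℕ)
    (hB : ∀ w, B w = Nat.card {u : Fin (q + 1) → F // u ∈ V ∧ hammingNorm u = w})
    (b : ℕ) (hb : B 3 = b) :
    (B 4 : ℤ) = ((q + 1).choose 4 : ℤ) - ((q : ℤ) - 2) * b ∧
    ∀ w, 5 ≤ w → w ≤ q + 1 → (B w : ℤ) = A w + (-1 : ℤ) ^ w *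
      (((q + 1).choose w : ℤ) * ((w - 1).choose 3 : ℤ) -
        ((q - 2).choose (w - 3) : ℤ) * b) := by
  classical
  set sup : (Fin (q + 1) → F) → Finset (Fin (q + 1)) :=
    fun u => univ.filter (fun i => u i ≠ 0) with hsup
  set VF : Finset (Fin (q + 1) → F) := univ.filter (fun u => u ∈ V) with hVF
  set N : Finset (Fin (q + 1)) → ℕ :=
    fun S => (VF.filter (fun u => sup u ⊆ S)).card with hN
  set E : Finset (Fin (q + 1)) → ℕ :=
    fun S => (VF.filter (fun u => sup u = S)).card with hE
  have hnormsup : ∀ u : Fin (q + 1) → F, hammingNorm u = (sup u).card := by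
    intro u
    simp [hsup, hammingNorm]
  have hmem : ∀ u : Fin (q + 1) → F, u ∈ V ↔ u - v ∈ C := by
    intro u; rw [hV]; exact Iff.rfl
  have hzero : ∀ x ∈ C, hammingNorm x ≤ 4 → x = 0 := by
    intro x hx hle
    by_contra hne
    have := hmin x hx hne
    omega
  have hwt' : ∀ u ∈ V, 3 ≤ (sup u).card := by
    intro u hu
    rw [← hnormsup]
    exact hwt u hu
  -- vanishing of E below weight 3
  have hE_lt3 : ∀ S : Finset (Fin (q + 1)), S.card < 3 → E S = 0 := by
    intro S hS
    simp only [hE]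
    rw [Finset.card_eq_zero, Finset.filter_eq_empty_iff]
    intro u hu
    rw [hVF, mem_filter] at hu
    intro hsupu
    have h3 := hwt' u hu.2
    rw [hsupu] at h3
    omega
  -- N = E for small sets
  have hNE3 : ∀ S : Finset (Fin (q + 1)), S.card ≤ 3 → N S = E S := by
    intro S hS
    simp only [hN, hE]
    congr 1
    apply Finset.filter_congr
    intro u hu
    rw [hVF, mem_filter] at hu
    constructor
    · intro hsub
      exact Finset.eq_of_subset_of_card_le hsub (le_trans hS (hwt' u hu.2))
    · intro h; rw [h]
  -- N as sum of E over subsets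
  have hEN : ∀ S : Finset (Fin (q + 1)), N S = ∑ T ∈ S.powerset, E T := by
    intro S
    simp only [hN, hE]
    rw [Finset.card_eq_sum_card_fiberwise
      (f := sup) (t := S.powerset) (fun u hu => mem_powerset.2 (mem_filter.1 hu).2)]
    apply Finset.sum_congr rfl
    intro T hT
    rw [mem_powerset] at hT
    congr 1
    ext u
    simp only [mem_filter]
    constructor
    · rintro ⟨⟨h1, _⟩, h3⟩; exact ⟨h1, h3⟩
    · rintro ⟨h1, h3⟩; exact ⟨⟨h1, h3 ▸ hT⟩, h3⟩
  -- B as sum of E over sets of fixed size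
  have hB' : ∀ w : ℕ, B w = ∑ T ∈ powersetCard w (univ : Finset (Fin (q + 1))), E T := by
    intro w
    rw [hB w, Nat.card_eq_fintype_card, Fintype.card_subtype]
    rw [Finset.card_eq_sum_card_fiberwise
      (f := sup) (t := powersetCard w (univ : Finset (Fin (q + 1)))) ?_]
    · apply Finset.sum_congr rfl
      intro T hT
      have hTc := (mem_powersetCard.1 hT).2
      simp only [hE]
      congr 1
      ext u
      simp only [hVF, mem_filter, mem_univ, true_and]
      constructor
      · rintro ⟨⟨h1, _⟩, h3⟩; exact ⟨h1, h3⟩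
      · rintro ⟨h1, h3⟩
        refine ⟨⟨h1, ?_⟩, h3⟩
        rw [hnormsup, h3, hTc]
    · intro u hu
      rw [Finset.mem_coe, mem_filter] at hu
      rw [Finset.mem_coe, mem_powersetCard]
      exact ⟨Finset.subset_univ _, by rw [← hnormsup]; exact hu.2.2⟩
  -- uniqueness of coset vectors supported on small sets
  have huniq : ∀ u₁ u₂ : Fin (q + 1) → F, u₁ ∈ V → u₂ ∈ V → ∀ S : Finset (Fin (q + 1)),
      S.card ≤ 4 → sup u₁ ⊆ S → sup u₂ ⊆ S → u₁ = u₂ := by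
    intro u₁ u₂ h₁ h₂ S hS hs₁ hs₂
    have hc : u₁ - u₂ ∈ C := by
      have h := C.sub_mem ((hmem u₁).1 h₁) ((hmem u₂).1 h₂)
      rwa [sub_sub_sub_cancel_right] at h
    have hsubd : sup (u₁ - u₂) ⊆ S := by
      intro i hi
      simp only [hsup, mem_filter, mem_univ, true_and] at hi
      by_contra hiS
      have h1 : u₁ i = 0 := by
        by_contra h
        exact hiS (hs₁ (by simp only [hsup, mem_filter, mem_univ, true_and]; exact h))
      have h2 : u₂ i = 0 := by
        by_contra h
        exact hiS (hs₂ (by simp only [hsup, mem_filter, mem_univ, true_and]; exact h))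
      exact hi (by simp [h1, h2])
    have hle : hammingNorm (u₁ - u₂) ≤ 4 := by
      rw [hnormsup]
      exact le_trans (Finset.card_le_card hsubd) hS
    exact sub_eq_zero.1 (hzero _ hc hle)
  -- surjectivity of restriction maps
  have hsurj : ∀ Z : Finset (Fin (q + 1)), Z.card ≤ q - 3 → ∀ t : {i // i ∈ Z} → F,
      ∃ c, c ∈ C ∧ ∀ j : {i // i ∈ Z}, c j.1 = t j := by
    intro Z hZ t
    obtain ⟨W, hZW, _, hWcard⟩ := Finset.exists_subsuperset_card_eq
      (Finset.subset_univ Z) hZ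
      (by rw [Finset.card_univ, Fintype.card_fin]; omega)
    set g : C → ({i // i ∈ W} → F) := fun c j => (c : Fin (q + 1) → F) j.1 with hg
    have hginj : Function.Injective g := by
      intro c₁ c₂ hcc
      have hdiff : ((c₁ : Fin (q + 1) → F) - c₂) = 0 := by
        apply hzero _ (C.sub_mem c₁.2 c₂.2)
        rw [hnormsup]
        have hsubc : sup ((c₁ : Fin (q + 1) → F) - c₂) ⊆ Wᶜ := by
          intro i hi
          simp only [hsup, mem_filter, mem_univ, true_and] at hi
          rw [Finset.mem_compl]
          intro hiW
          apply hi
          have h := congrFun hcc ⟨i, hiW⟩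
          simp only [hg] at h
          simp [h]
        calc (sup _).card ≤ Wᶜ.card := Finset.card_le_card hsubc
          _ ≤ 4 := by
            rw [Finset.card_compl, Fintype.card_fin, hWcard]
            omega
      have : (c₁ : Fin (q + 1) → F) = c₂ := sub_eq_zero.1 hdiff
      exact Subtype.ext this
    have hcards : Fintype.card C = Fintype.card ({i // i ∈ W} → F) := by
      rw [Module.card_eq_pow_finrank (K := F) (V := C), hcard, hdim,
        Fintype.card_fun, hcard, Fintype.card_coe, hWcard]
    have hgbij : Function.Bijective g :=
      (Fintype.bijective_iff_injective_and_card g).2 ⟨hginj, hcards⟩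
    obtain ⟨c, hc⟩ := hgbij.2 (fun j => if h : j.1 ∈ Z then t ⟨j.1, h⟩ else 0)
    refine ⟨c, c.2, fun j => ?_⟩
    have h := congrFun hc ⟨j.1, hZW j.2⟩
    simp only [hg] at h
    rw [h, dif_pos j.2]
  -- counting N on large sets
  have hNbig : ∀ S : Finset (Fin (q + 1)), 4 ≤ S.card → N S = q ^ (S.card - 4) := by
    intro S hS4
    have hSle : S.card ≤ q + 1 := by
      simpa using Finset.card_le_univ S
    have hZcard : Sᶜ.card = q + 1 - S.card := by
      rw [Finset.card_compl, Fintype.card_fin]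
    have hZle : Sᶜ.card ≤ q - 3 := by omega
    set CF : Finset (Fin (q + 1) → F) := univ.filter (fun c => c ∈ C) with hCF
    set res : (Fin (q + 1) → F) → ({i // i ∈ Sᶜ} → F) := fun u j => u j.1 with hres
    have hfib : ∀ t : {i // i ∈ Sᶜ} → F,
        (CF.filter (fun c => res c = t)).card = (CF.filter (fun c => res c = 0)).card := by
      intro t
      obtain ⟨c₀, hc₀C, hc₀⟩ := hsurj Sᶜ hZle t
      apply Finset.card_nbij' (i := fun c => c - c₀) (j := fun c => c + c₀)
      · intro a ha
        simp only [Finset.mem_coe, hCF, mem_filter, mem_univ, true_and] at ha ⊢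
        refine ⟨C.sub_mem ha.1 hc₀C, ?_⟩
        funext j
        have h1 : a j.1 = t j := congrFun ha.2 j
        simp [hres, h1, hc₀ j]
      · intro a ha
        simp only [Finset.mem_coe, hCF, mem_filter, mem_univ, true_and] at ha ⊢
        refine ⟨C.add_mem ha.1 hc₀C, ?_⟩
        funext j
        have h1 : a j.1 = 0 := congrFun ha.2 j
        simp [hres, h1, hc₀ j]
      · intro a _; simp
      · intro a _; simp
    have hCFcard : CF.card = q ^ (q - 3) := by
      have h1 : Fintype.card C = q ^ (q - 3) := by
        rw [Module.card_eq_pow_finrank (K := F) (V := C), hcard, hdim]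
      rw [hCF, ← h1]
      exact (Fintype.card_subtype _).symm
    have hcount : CF.card = q ^ Sᶜ.card * (CF.filter (fun c => res c = 0)).card := by
      rw [Finset.card_eq_sum_card_fiberwise
        (f := res) (t := (univ : Finset ({i // i ∈ Sᶜ} → F))) (fun x _ => mem_univ _)]
      rw [Finset.sum_congr rfl (fun t _ => hfib t), Finset.sum_const, Finset.card_univ,
        smul_eq_mul, Fintype.card_fun, Fintype.card_coe, hcard]
    have hq0 : 0 < q := by omega
    have hKcard : (CF.filter (fun c => res c = 0)).card = q ^ (S.card - 4) := by
      have hpow : q ^ (q - 3) = q ^ Sᶜ.card * q ^ (S.card - 4) := by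
        rw [← pow_add]
        congr 1
        omega
      have h2 := hcount.symm.trans hCFcard
      rw [hpow] at h2
      exact Nat.eq_of_mul_eq_mul_left (pow_pos hq0 _) h2
    simp only [hN]
    rw [← hKcard, ← hfib (fun j => - v j.1)]
    apply Finset.card_nbij' (i := fun u => u - v) (j := fun c => c + v)
    · intro a ha
      simp only [Finset.mem_coe, hVF, hCF, mem_filter, mem_univ, true_and] at ha ⊢
      refine ⟨(hmem a).1 ha.1, ?_⟩
      funext j
      have hj : j.1 ∉ S := Finset.mem_compl.1 j.2
      have haj : a j.1 = 0 := by
        by_contra h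
        exact hj (ha.2 (by simp only [hsup, mem_filter, mem_univ, true_and]; exact h))
      simp [hres, haj]
    · intro c hc
      simp only [Finset.mem_coe, hVF, hCF, mem_filter, mem_univ, true_and] at hc ⊢
      constructor
      · apply (hmem _).2
        simpa using hc.1
      · intro i hi
        simp only [hsup, mem_filter, mem_univ, true_and] at hi
        by_contra hiS
        have hiZ : i ∈ Sᶜ := Finset.mem_compl.2 hiS
        have h := congrFun hc.2 ⟨i, hiZ⟩
        simp only [hres] at h
        apply hi
        simp [h]
    · intro a _; simp
    · intro a _; simp
  -- Möbius inversion
  have hinner : ∀ T U : Finset (Fin (q + 1)), U ⊆ T →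
      (∑ S ∈ T.powerset.filter (fun S => U ⊆ S), (-1 : ℤ) ^ (T.card - S.card))
        = if U = T then 1 else 0 := by
    intro T U hU
    have hbij : (∑ S ∈ T.powerset.filter (fun S => U ⊆ S), (-1 : ℤ) ^ (T.card - S.card))
        = ∑ R ∈ (T \ U).powerset, (-1 : ℤ) ^ ((T \ U).card - R.card) := by
      apply Finset.sum_bij' (i := fun S _ => S \ U) (j := fun R _ => R ∪ U)
      · intro S hS
        rw [mem_filter, mem_powerset] at hS
        rw [mem_powerset]
        exact Finset.sdiff_subset_sdiff hS.1 (Finset.Subset.refl U)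
      · intro R hR
        rw [mem_powerset] at hR
        rw [mem_filter, mem_powerset]
        exact ⟨Finset.union_subset (hR.trans Finset.sdiff_subset) hU, Finset.subset_union_right⟩
      · intro S hS
        rw [mem_filter] at hS
        exact Finset.sdiff_union_of_subset hS.2
      · intro R hR
        rw [mem_powerset] at hR
        exact Finset.union_sdiff_cancel_right
          (Finset.disjoint_of_subset_left hR Finset.sdiff_disjoint)
      · intro S hS
        rw [mem_filter, mem_powerset] at hS
        congr 1
        have h1 := Finset.card_le_card hS.1
        have h2 := Finset.card_le_card hS.2
        rw [Finset.card_sdiff_of_subset hU, Finset.card_sdiff_of_subset hS.2]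
        omega
    rw [hbij]
    rw [Finset.sum_congr rfl (fun R hR =>
      neg_one_pow_sub' (Finset.card_le_card (mem_powerset.1 hR)))]
    rw [← Finset.mul_sum, Finset.sum_powerset_neg_one_pow_card]
    by_cases hUT : U = T
    · subst hUT
      simp
    · rw [if_neg ?_, if_neg hUT, mul_zero]
      intro h
      exact hUT (Finset.Subset.antisymm hU (Finset.sdiff_eq_empty_iff_subset.1 h))
  have hinv : ∀ T : Finset (Fin (q + 1)),
      (E T : ℤ) = ∑ S ∈ T.powerset, (-1 : ℤ) ^ (T.card - S.card) * (N S : ℤ) := by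
    intro T
    have hps : ∀ S ∈ T.powerset,
        ((N S : ℤ)) = ∑ U ∈ T.powerset, (if U ⊆ S then (E U : ℤ) else 0) := by
      intro S hS
      rw [mem_powerset] at hS
      rw [hEN S]
      push_cast
      rw [← Finset.sum_filter]
      apply Finset.sum_congr _ (fun _ _ => rfl)
      ext U
      simp only [mem_filter, mem_powerset]
      exact ⟨fun h => ⟨h.trans hS, h⟩, fun h => h.2⟩
    symm
    calc ∑ S ∈ T.powerset, (-1 : ℤ) ^ (T.card - S.card) * (N S : ℤ)
        = ∑ S ∈ T.powerset, ∑ U ∈ T.powerset,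
            (if U ⊆ S then (-1 : ℤ) ^ (T.card - S.card) * (E U : ℤ) else 0) := by
          apply Finset.sum_congr rfl
          intro S hS
          rw [hps S hS, Finset.mul_sum]
          exact Finset.sum_congr rfl fun U _ => by rw [mul_ite, mul_zero]
      _ = ∑ U ∈ T.powerset, ∑ S ∈ T.powerset,
            (if U ⊆ S then (-1 : ℤ) ^ (T.card - S.card) * (E U : ℤ) else 0) :=
          Finset.sum_comm
      _ = ∑ U ∈ T.powerset, (if U = T then 1 else 0) * (E U : ℤ) := by
          apply Finset.sum_congr rfl
          intro U hU
          rw [← Finset.sum_filter, ← Finset.sum_mul, hinner T U (mem_powerset.1 hU)]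
      _ = (E T : ℤ) := by
          rw [Finset.sum_eq_single T]
          · simp
          · intro U _ hne; simp [hne]
          · intro h; exact absurd (Finset.mem_powerset_self T) h
  -- number of w-sets containing a fixed 3-set
  have hcontain : ∀ (w : ℕ), 3 ≤ w → ∀ S : Finset (Fin (q + 1)), S.card = 3 →
      ((powersetCard w (univ : Finset (Fin (q + 1)))).filter (fun T => S ⊆ T)).card
        = (q - 2).choose (w - 3) := by
    intro w hw3 S hS3
    have hstep : ((powersetCard w (univ : Finset (Fin (q + 1)))).filter (fun T => S ⊆ T)).card
        = (powersetCard (w - 3) Sᶜ).card := by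
      apply Finset.card_nbij' (i := fun T => T \ S) (j := fun R => R ∪ S)
      · intro T hT
        rw [Finset.mem_coe, mem_filter, mem_powersetCard] at hT
        rw [Finset.mem_coe, mem_powersetCard]
        constructor
        · intro i hi
          rw [Finset.mem_compl]
          exact (Finset.mem_sdiff.1 hi).2
        · rw [Finset.card_sdiff_of_subset hT.2, hT.1.2, hS3]
      · intro R hR
        rw [Finset.mem_coe, mem_powersetCard] at hR
        rw [Finset.mem_coe, mem_filter, mem_powersetCard]
        have hdisj : Disjoint R S := by
          rw [Finset.disjoint_left]
          intro a haR haS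
          exact (Finset.mem_compl.1 (hR.1 haR)) haS
        refine ⟨⟨Finset.subset_univ _, ?_⟩, Finset.subset_union_right⟩
        rw [Finset.card_union_of_disjoint hdisj, hR.2, hS3]
        omega
      · intro T hT
        rw [Finset.mem_coe, mem_filter] at hT
        exact Finset.sdiff_union_of_subset hT.2
      · intro R hR
        rw [Finset.mem_coe, mem_powersetCard] at hR
        apply Finset.union_sdiff_cancel_right
        rw [Finset.disjoint_left]
        intro a haR haS
        exact (Finset.mem_compl.1 (hR.1 haR)) haS
    rw [hstep, Finset.card_powersetCard, Finset.card_compl, Fintype.card_fin, hS3]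
    congr 1
  -- the master formula
  have hmain : ∀ w : ℕ, 4 ≤ w → w ≤ q + 1 →
      (B w : ℤ) = ((q + 1).choose w : ℤ) *
          (∑ j ∈ range (w + 1),
            if 4 ≤ j then (w.choose j : ℤ) * ((-1) ^ (w - j) * (q : ℤ) ^ (j - 4)) else 0)
        + (-1) ^ (w - 3) * (((q - 2).choose (w - 3) : ℤ) * (B 3 : ℤ)) := by
    intro w hw4 hwq
    rw [hB' w]
    push_cast
    rw [Finset.sum_congr rfl (fun T _ => hinv T)]
    have hperT : ∀ T ∈ powersetCard w (univ : Finset (Fin (q + 1))),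
        (∑ S ∈ T.powerset, (-1 : ℤ) ^ (T.card - S.card) * (N S : ℤ))
          = (∑ j ∈ range (w + 1),
              if 4 ≤ j then (w.choose j : ℤ) * ((-1) ^ (w - j) * (q : ℤ) ^ (j - 4)) else 0)
            + (-1) ^ (w - 3) * ∑ S ∈ powersetCard 3 T, (N S : ℤ) := by
      intro T hT
      have hTcard : T.card = w := (mem_powersetCard.1 hT).2
      rw [Finset.sum_powerset, hTcard]
      have hsplit : ∀ j ∈ range (w + 1),
          (∑ S ∈ powersetCard j T, (-1 : ℤ) ^ (w - S.card) * (N S : ℤ))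
            = (if 4 ≤ j then (w.choose j : ℤ) * ((-1) ^ (w - j) * (q : ℤ) ^ (j - 4)) else 0)
              + (if j = 3 then (-1 : ℤ) ^ (w - 3) * ∑ S ∈ powersetCard 3 T, (N S : ℤ) else 0) := by
        intro j hj
        rw [mem_range] at hj
        rcases lt_trichotomy j 3 with h3 | h3 | h3
        · rw [if_neg (by omega), if_neg (by omega), add_zero]
          apply Finset.sum_eq_zero
          intro S hS
          have hSc : S.card = j := (mem_powersetCard.1 hS).2
          have hz : N S = 0 := by
            rw [hNE3 S (by omega)]
            exact hE_lt3 S (by omega)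
          rw [hz]
          simp
        · subst h3
          rw [if_neg (by omega), if_pos rfl, zero_add, Finset.mul_sum]
          apply Finset.sum_congr rfl
          intro S hS
          have hSc : S.card = 3 := (mem_powersetCard.1 hS).2
          rw [hSc]
        · have h4 : 4 ≤ j := by omega
          rw [if_pos h4, if_neg (by omega), add_zero]
          have hterm : ∀ S ∈ powersetCard j T,
              (-1 : ℤ) ^ (w - S.card) * (N S : ℤ) = (-1) ^ (w - j) * (q : ℤ) ^ (j - 4) := by
            intro S hS
            have hSc : S.card = j := (mem_powersetCard.1 hS).2
            rw [hNbig S (by omega), hSc]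
            push_cast
            ring
          rw [Finset.sum_congr rfl hterm, Finset.sum_const,
            Finset.card_powersetCard, hTcard, nsmul_eq_mul]
      rw [Finset.sum_congr rfl hsplit, Finset.sum_add_distrib,
        Finset.sum_ite_eq' (range (w + 1)) 3, if_pos (by rw [mem_range]; omega)]
    rw [Finset.sum_congr rfl hperT, Finset.sum_add_distrib, Finset.sum_const,
      Finset.card_powersetCard, Finset.card_univ, Fintype.card_fin, nsmul_eq_mul]
    congr 1
    rw [← Finset.mul_sum]
    have hswap : (∑ T ∈ powersetCard w (univ : Finset (Fin (q + 1))),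
          ∑ S ∈ powersetCard 3 T, (N S : ℤ))
        = ∑ S ∈ powersetCard 3 (univ : Finset (Fin (q + 1))),
            ((q - 2).choose (w - 3) : ℤ) * (N S : ℤ) := by
      have step1 : ∀ T ∈ powersetCard w (univ : Finset (Fin (q + 1))),
          (∑ S ∈ powersetCard 3 T, (N S : ℤ))
            = ∑ S ∈ powersetCard 3 (univ : Finset (Fin (q + 1))),
                (if S ⊆ T then (N S : ℤ) else 0) := by
        intro T _
        rw [← Finset.sum_filter]
        apply Finset.sum_congr _ (fun _ _ => rfl)
        ext S
        simp only [mem_filter, mem_powersetCard]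
        constructor
        · rintro ⟨h1, h2⟩; exact ⟨⟨Finset.subset_univ _, h2⟩, h1⟩
        · rintro ⟨⟨_, h2⟩, h1⟩; exact ⟨h1, h2⟩
      rw [Finset.sum_congr rfl step1, Finset.sum_comm]
      apply Finset.sum_congr rfl
      intro S hS
      rw [← Finset.sum_filter, Finset.sum_const, nsmul_eq_mul,
        hcontain w (by omega) S (mem_powersetCard.1 hS).2]
    rw [hswap, ← Finset.mul_sum]
    have hNb : (∑ S ∈ powersetCard 3 (univ : Finset (Fin (q + 1))), (N S : ℤ)) = (B 3 : ℤ) := by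
      rw [hB' 3]
      push_cast
      apply Finset.sum_congr rfl
      intro S hS
      rw [hNE3 S (le_of_eq (mem_powersetCard.1 hS).2)]
    rw [hNb]
  constructor
  · have h4 := hmain 4 (le_refl 4) (by omega)
    have hsum4 : (∑ j ∈ range (4 + 1),
        if 4 ≤ j then ((4 : ℕ).choose j : ℤ) * ((-1) ^ (4 - j) * (q : ℤ) ^ (j - 4)) else 0) = 1 := by
      rw [Finset.sum_range_succ]
      norm_num
      apply Finset.sum_eq_zero
      intro j hj
      rw [Finset.mem_range] at hj
      rw [if_neg (by omega)]
    rw [hsum4] at h4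
    have h1 : ((q - 2).choose (4 - 3) : ℤ) = (q : ℤ) - 2 := by
      rw [show (4 - 3 : ℕ) = 1 by norm_num, Nat.choose_one_right,
        Nat.cast_sub (by omega : 2 ≤ q)]
      norm_num
    rw [h1, hb] at h4
    rw [h4]
    ring
  · intro w hw5 hwle
    have h := hmain w (by omega) hwle
    rw [key_ident q w hw5, hb] at h
    rw [h, hA w hw5]
    have hsign : (-1 : ℤ) ^ (w - 3) = -(-1) ^ w := by
      rw [neg_one_pow_sub' (by omega : 3 ≤ w)]
      ring
    rw [hsign]
    ring
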